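/- arXiv:2504.13470 — 6 statements merged into one kernel-verified Lean document; each statement's English description precedes it below -/
import Mathlib

section
/- Let A be a unital C*-algebra, T ∈ A, and suppose there exists S₀ ∈ A with S₀T = R, where R is a projection satisfying TR = T (a right support projection for T). Then T*T is invertible in the corner RAR, i.e., there exists S₁ ∈ RAR with S₁(T*T) = (T*T)S₁ = R. -/
/-- If `T` in a unital C*-algebra has a right support projection `R` (i.e. `T * R = T`)
and `S₀ * T = R` for some `S₀`, then `T* T` is invertible in the corner `R A R`. -/
theorem stmt0 {A : Type*} [CStarAlgebra A] (T S₀ R : A)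
    (hRsa : IsSelfAdjoint R) (hRidem : IsIdempotentElem R)
    (hTR : T * R = T) (hS₀ : S₀ * T = R) :
    ∃ S₁ : A, R * S₁ * R = S₁ ∧ S₁ * (star T * T) = R ∧ (star T * T) * S₁ = R := by
  letI := CStarAlgebra.spectralOrder A
  haveI := CStarAlgebra.spectralOrderedRing A
  have hR2 : R * R = R := hRidem
  set c : ℝ := ‖S₀‖ ^ 2 with hc
  have hc0 : (0 : ℝ) ≤ c := by positivity
  set d : A := star T * T + (1 - R) with hd
  -- (1 - R) is a projection, hence nonneg
  have hQsa : IsSelfAdjoint (1 - R) := by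
    rw [IsSelfAdjoint, star_sub, star_one, hRsa.star_eq]
  have hQidem : (1 - R) * (1 - R) = 1 - R := by noncomm_ring [hR2]
  have hQ0 : (0 : A) ≤ 1 - R := by
    have := star_mul_self_nonneg (1 - R)
    rwa [hQsa.star_eq, hQidem] at this
  have hTT0 : (0 : A) ≤ star T * T := star_mul_self_nonneg T
  -- R ≤ c • (star T * T)
  have hRST : R = star T * (star S₀ * S₀) * T := by
    have h1 : star R * R = R := by rw [hRsa.star_eq, hR2]
    rw [← h1]
    nth_rewrite 1 [← hS₀]
    nth_rewrite 1 [← hS₀]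
    rw [star_mul]
    noncomm_ring
  have hconj : star T * (star S₀ * S₀) * T ≤ star T * algebraMap ℝ A c * T :=
    star_left_conjugate_le_conjugate CStarAlgebra.star_mul_le_algebraMap_norm_sq T
  have halg : star T * algebraMap ℝ A c * T = c • (star T * T) := by
    rw [Algebra.algebraMap_eq_smul_one, mul_smul_comm, mul_one, smul_mul_assoc]
  have hRle : R ≤ c • (star T * T) := by rw [hRST, ← halg]; exact hconj
  -- 1 ≤ (1 + c) • d
  have hone : (1 : A) ≤ (1 + c) • d := by
    have h1 : c • (star T * T) ≤ (1 + c) • (star T * T) := by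
      rw [add_smul, one_smul]
      exact le_add_of_nonneg_left hTT0
    have h2 : (1 : A) - R ≤ (1 + c) • (1 - R) := by
      rw [add_smul, one_smul]
      exact le_add_of_nonneg_right (smul_nonneg hc0 hQ0)
    calc (1 : A) = R + (1 - R) := by noncomm_ring
    _ ≤ (1 + c) • (star T * T) + (1 + c) • (1 - R) :=
        add_le_add (hRle.trans h1) h2
    _ = (1 + c) • d := by rw [hd, smul_add]
  have hunit : IsUnit ((1 + c) • d) :=
    CStarAlgebra.isUnit_of_le 1 hone
  obtain ⟨u, hu⟩ := hunit
  set g : A := (1 + c) • (↑u⁻¹ : A) with hg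
  have hgd : g * d = 1 := by
    have h : (↑u⁻¹ : A) * ↑u = 1 := u.inv_mul
    calc g * d = (↑u⁻¹ : A) * ((1 + c) • d) := by
          rw [hg, smul_mul_assoc, mul_smul_comm]
    _ = (↑u⁻¹ : A) * ↑u := by rw [hu]
    _ = 1 := h
  have hdg : d * g = 1 := by
    have h : (↑u : A) * ↑u⁻¹ = 1 := u.mul_inv
    calc d * g = ((1 + c) • d) * (↑u⁻¹ : A) := by
          rw [hg, mul_smul_comm, smul_mul_assoc]
    _ = (↑u : A) * ↑u⁻¹ := by rw [hu]
    _ = 1 := h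
  -- R commutes with star T * T and with d
  have hRsT : R * star T = star T := by
    have h : star (T * R) = star T := by rw [hTR]
    rwa [star_mul, hRsa.star_eq] at h
  have hTTR : (star T * T) * R = star T * T := by rw [mul_assoc, hTR]
  have hRTT : R * (star T * T) = star T * T := by rw [← mul_assoc, hRsT]
  have hdR : d * R = R * d := by
    rw [hd, add_mul, mul_add, hTTR, hRTT, sub_mul, mul_sub, one_mul, mul_one, hR2]
  have hgR : g * R = R * g := by
    calc g * R = g * R * (d * g) := by rw [hdg, mul_one]
    _ = g * (R * d) * g := by noncomm_ring
    _ = g * (d * R) * g := by rw [hdR]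
    _ = g * d * (R * g) := by noncomm_ring
    _ = R * g := by rw [hgd, one_mul]
  have hQd : (1 - R) * d = 1 - R := by
    rw [hd, sub_mul, one_mul, mul_add, hRTT, mul_sub, mul_one, hR2]
    noncomm_ring
  have hQg : (1 - R) * g = 1 - R := by
    calc (1 - R) * g = (1 - R) * d * g := by rw [hQd]
    _ = (1 - R) * (d * g) := by rw [mul_assoc]
    _ = 1 - R := by rw [hdg, mul_one]
  have hTTd : star T * T = d - (1 - R) := by rw [hd]; noncomm_ring
  have hgQ : g * (1 - R) = (1 - R) * g := by
    rw [sub_mul, mul_sub, one_mul, mul_one, hgR]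
  refine ⟨R * g, ?_, ?_, ?_⟩
  · calc R * (R * g) * R = R * R * (g * R) := by noncomm_ring
    _ = R * R * (R * g) := by rw [hgR]
    _ = R * g := by rw [hR2, ← mul_assoc, hR2]
  · calc R * g * (star T * T) = R * (g * d) - R * (g * (1 - R)) := by
          rw [hTTd]; noncomm_ring
    _ = R - R * ((1 - R) * g) := by rw [hgd, mul_one, hgQ]
    _ = R := by rw [hQg, mul_sub, mul_one, hR2]; noncomm_ring
  · calc (star T * T) * (R * g) = (star T * T) * g := by rw [← mul_assoc, hTTR]
    _ = (d - (1 - R)) * g := by rw [← hTTd]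
    _ = 1 - (1 - R) := by rw [sub_mul, hdg, hQg]
    _ = R := by noncomm_ring
end

section
/- Let V be a bounded linear operator on a Hilbert space H that is an isometry but not unitary (V*V = I and VV* < I). Then for every bounded operator A with ‖A‖ < 1, the operator V − A is not surjective (equivalently, its range is not dense, i.e., its left support projection is strictly less than I). -/
variable {H : Type*} [NormedAddCommGroup H] [InnerProductSpace ℂ H] [CompleteSpace H]

open ContinuousLinearMap in
lemma aux_surj_of_dense {c : ℝ} (hc : 0 < c) (T : H →L[ℂ] H)
    (hb : ∀ x, c * ‖x‖ ≤ ‖T x‖) (hd : DenseRange ⇑T) : Function.Surjective ⇑T := by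
  have hanti : AntilipschitzWith ⟨c⁻¹, by positivity⟩ ⇑T :=
    T.antilipschitz_of_bound fun x => by
      show ‖x‖ ≤ c⁻¹ * ‖T x‖; rw [inv_mul_eq_div, le_div_iff₀ hc]
      linarith [hb x]
  have hclosed : IsClosed (Set.range ⇑T) := hanti.isClosed_range T.uniformContinuous
  have : Set.range ⇑T = Set.univ := by
    rw [← hclosed.closure_eq]; exact hd.closure_range
  exact Set.range_eq_univ.mp this

open ContinuousLinearMap in
lemma aux_step {c : ℝ} (hc : 0 < c) (T S : H →L[ℂ] H)
    (hbT : ∀ x, c * ‖x‖ ≤ ‖T x‖) (hTS : ‖S - T‖ < c)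
    (hT : Function.Surjective ⇑T) : Function.Surjective ⇑S := by
  have hinj : LinearMap.ker (T : H →ₗ[ℂ] H) = ⊥ := by
    rw [LinearMap.ker_eq_bot, ContinuousLinearMap.coe_coe]
    intro x y hxy
    by_contra hne
    have h1 : c * ‖x - y‖ ≤ ‖T (x - y)‖ := hbT _
    rw [map_sub, hxy, sub_self, norm_zero] at h1
    have : 0 < ‖x - y‖ := by simpa [sub_eq_zero] using hne
    nlinarith
  have hsurj : LinearMap.range (T : H →ₗ[ℂ] H) = ⊤ := LinearMap.range_eq_top.mpr hT
  let e : H ≃L[ℂ] H := ContinuousLinearEquiv.ofBijective T hinj hsurj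
  have he : ∀ x, e x = T x := fun x => rfl
  have hTe : ∀ z : H, T ((e.symm : H →L[ℂ] H) z) = z := fun z => by
    have h0 : (e.symm : H →L[ℂ] H) z = e.symm z := rfl
    rw [h0, ← he, e.apply_symm_apply]
  set B : H →L[ℂ] H := (e.symm : H →L[ℂ] H) ∘L (S - T) with hB
  have hesymm : ‖(e.symm : H →L[ℂ] H)‖ ≤ c⁻¹ := by
    refine opNorm_le_bound _ (by positivity) fun y => ?_
    have h1 : c * ‖(e.symm : H →L[ℂ] H) y‖ ≤ ‖T ((e.symm : H →L[ℂ] H) y)‖ := hbT _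
    rw [hTe y] at h1
    rw [inv_mul_eq_div, le_div_iff₀ hc]
    linarith
  have hBnorm : ‖B‖ < 1 := by
    calc ‖B‖ ≤ ‖(e.symm : H →L[ℂ] H)‖ * ‖S - T‖ := opNorm_comp_le _ _
    _ < c⁻¹ * c := by
        rcases eq_or_lt_of_le (norm_nonneg (S - T)) with h | h
        · rw [← h]; simpa using mul_pos (inv_pos.mpr hc) hc
        · exact mul_lt_mul' hesymm hTS (norm_nonneg _) (by positivity)
    _ = 1 := inv_mul_cancel₀ hc.ne'
  have hnB : ‖-B‖ < 1 := by rwa [norm_neg]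
  have husurj : Function.Surjective ⇑(1 + B : H →L[ℂ] H) := by
    intro y
    refine ⟨(↑(Units.oneSub (-B) hnB)⁻¹ : H →L[ℂ] H) y, ?_⟩
    have h2 := congrArg (fun f : H →L[ℂ] H => f y) (Units.oneSub (-B) hnB).mul_inv
    simpa [Units.val_oneSub, sub_neg_eq_add, mul_apply, one_apply] using h2
  have hS : ∀ x, S x = T ((1 + B) x) := by
    intro x
    have h1 : (1 + B) x = x + (e.symm : H →L[ℂ] H) ((S - T) x) := by
      simp [hB, add_apply, one_apply, comp_apply]
    rw [h1, map_add, hTe, sub_apply]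
    abel
  intro y
  obtain ⟨z, hz⟩ := hT y
  obtain ⟨x, hx⟩ := husurj z
  exact ⟨x, by rw [hS, hx, hz]⟩

open ContinuousLinearMap in
lemma aux_lb (V A : H →L[ℂ] H) (hiso : star V * V = 1) (hA : ‖A‖ < 1)
    {t : ℝ} (ht0 : 0 ≤ t) (ht1 : t ≤ 1) :
    ∀ x, (1 - ‖A‖) * ‖x‖ ≤ ‖(V - t • A) x‖ := by
  intro x
  have hV : ‖V x‖ = ‖x‖ := by
    refine (V.norm_map_iff_adjoint_comp_self.mpr ?_) x
    rw [← star_eq_adjoint]; exact hiso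
  have h1 : ‖V x‖ - ‖t • A x‖ ≤ ‖V x - t • A x‖ := norm_sub_norm_le _ _
  have h2 : ‖t • A x‖ = t * ‖A x‖ := by
    rw [norm_smul, Real.norm_eq_abs, abs_of_nonneg ht0]
  have h3 : ‖A x‖ ≤ ‖A‖ * ‖x‖ := A.le_opNorm x
  have h4 : (V - t • A) x = V x - t • A x := by simp
  rw [h4]
  have h5 : (0:ℝ) ≤ ‖x‖ := norm_nonneg x
  have h6 : (0:ℝ) ≤ ‖A‖ := norm_nonneg A
  have h7 : (0:ℝ) ≤ ‖A x‖ := norm_nonneg _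
  nlinarith

/-- If `V` is a non-unitary isometry on a Hilbert space and `‖A‖ < 1`, then `V - A`
does not have dense range (so in particular it is not surjective). -/
theorem stmt1 (V A : H →L[ℂ] H) (hiso : star V * V = 1)
    (hle : V * star V ≤ 1) (hne : V * star V ≠ 1) (hA : ‖A‖ < 1) :
    ¬ DenseRange ⇑(V - A) := by
  intro hd
  set c : ℝ := 1 - ‖A‖ with hcdef
  have hc : 0 < c := by simp [hcdef]; linarith
  -- V is not surjective
  have hVns : ¬ Function.Surjective ⇑V := by
    intro hs
    apply hne
    ext y
    obtain ⟨x, rfl⟩ := hs y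
    have hx : (star V) (V x) = x := by
      have := DFunLike.congr_fun hiso x
      simpa [ContinuousLinearMap.mul_apply] using this
    simp [ContinuousLinearMap.mul_apply, hx]
  -- V - A is surjective
  have hb1 : ∀ x, c * ‖x‖ ≤ ‖(V - A) x‖ := by
    intro x
    have := aux_lb V A hiso hA (t := 1) zero_le_one le_rfl x
    simpa using this
  have hsurj1 : Function.Surjective ⇑(V - A) := aux_surj_of_dense hc _ hb1 hd
  by_cases hA0 : A = 0
  · exact hVns (by simpa [hA0] using hsurj1)
  have hAn : 0 < ‖A‖ := norm_pos_iff.mpr hA0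
  set δ : ℝ := c / (2 * ‖A‖) with hδdef
  have hδ : 0 < δ := by positivity
  have key : ∀ n : ℕ, ∀ t : ℝ, 0 ≤ t → t ≤ 1 → t ≤ n * δ →
      Function.Surjective ⇑(V - t • A) → Function.Surjective ⇑V := by
    intro n
    induction n with
    | zero =>
        intro t ht0 ht1 htn hs
        have : t = 0 := le_antisymm (by simpa using htn) ht0
        subst this
        simpa using hs
    | succ n ih =>
        intro t ht0 ht1 htn hs
        set s : ℝ := max 0 (t - δ) with hsdef
        have hs0 : (0:ℝ) ≤ s := le_max_left _ _
        have hst : s ≤ t := max_le ht0 (sub_le_self _ hδ.le)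
        have hs1 : s ≤ 1 := hst.trans ht1
        have hsn : s ≤ n * δ := by
          refine max_le (by positivity) ?_
          push_cast at htn ⊢
          linarith
        have htms : t - s ≤ δ := by
          have := le_max_right 0 (t - δ)
          simp only [← hsdef] at this
          linarith
        have hdiff : ‖(V - s • A) - (V - t • A)‖ < c := by
          have heq : (V - s • A) - (V - t • A) = (t - s) • A := by module
          rw [heq, norm_smul, Real.norm_eq_abs, abs_of_nonneg (by linarith)]
          calc (t - s) * ‖A‖ ≤ δ * ‖A‖ := by nlinarith
          _ = c / 2 := by rw [hδdef]; field_simp [hAn.ne']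
          _ < c := by linarith
        exact ih s hs0 hs1 hsn
          (aux_step hc (V - t • A) (V - s • A) (aux_lb V A hiso hA ht0 ht1) hdiff hs)
  obtain ⟨n, hn⟩ := exists_nat_ge (1 / δ)
  have h1n : (1:ℝ) ≤ n * δ := by
    rw [div_le_iff₀ hδ] at hn
    linarith
  have hs1' : Function.Surjective ⇑(V - (1:ℝ) • A) := by rwa [one_smul]
  exact hVns (key n 1 zero_le_one le_rfl h1n hs1')
end

section
/- Let A be a unital C*-algebra, E a projection in A, and T ∈ A with E T* T E ≥ a² E for some a > 0. Then there exists a positive element S ∈ EAE such that TS is a partial isometry with (TS)*(TS) = E. -/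
open Polynomial in
private lemma commute_cfc_aux {A : Type*} [CStarAlgebra A] [PartialOrder A] [StarOrderedRing A]
    {a b : A} (ha : IsSelfAdjoint a) (hab : a * b = b * a) (f : ℝ → ℝ) :
    b * cfc f a = cfc f a * b := by
  by_cases hf : ContinuousOn f (spectrum ℝ a)
  · rw [cfc_apply f a ha hf]
    set s := spectrum ℝ a with hs
    have hcl : IsClosed {g : C(s, ℝ) | b * cfcHom ha g = cfcHom ha g * b} :=
      isClosed_eq (continuous_const.mul (cfcHom_continuous ha))
        ((cfcHom_continuous ha).mul continuous_const)
    have hbase : (polynomialFunctions s : Set C(s, ℝ)) ⊆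
        {g : C(s, ℝ) | b * cfcHom ha g = cfcHom ha g * b} := by
      rintro g hg
      rw [SetLike.mem_coe, polynomialFunctions, Subalgebra.mem_map] at hg
      obtain ⟨p, -, rfl⟩ := hg
      have hcomm : Commute b (aeval a p) := by
        induction p using Polynomial.induction_on' with
        | add p q hp hq => rw [map_add]; exact hp.add_right hq
        | monomial n c =>
          rw [aeval_monomial]
          have c1 : Commute b ((algebraMap ℝ A) c) := (Algebra.commutes c b).symm
          exact c1.mul_right ((show Commute b a from hab.symm).pow_right n)
      have h1 : (toContinuousMapOnAlgHom s) p =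
          aeval ((toContinuousMapOnAlgHom s) X) p := by
        rw [aeval_algHom_apply, aeval_X_left_apply]
      have h4 : (cfcHom ha (R := ℝ)).toAlgHom ((toContinuousMapOnAlgHom s) X) = a := by
        show cfcHom ha ((toContinuousMapOnAlgHom s) X) = a
        rw [toContinuousMapOnAlgHom_apply, toContinuousMapOn_X_eq_restrict_id]
        exact cfcHom_id ha
      have h2 : cfcHom ha ((toContinuousMapOnAlgHom s) p) = aeval a p := by
        rw [h1,
          show (cfcHom ha) ((aeval ((toContinuousMapOnAlgHom s) X)) p) =
            (cfcHom ha (R := ℝ)).toAlgHom ((aeval ((toContinuousMapOnAlgHom s) X)) p) from rfl,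
          ← aeval_algHom_apply, h4]
      show b * cfcHom ha ((toContinuousMapOnAlgHom s) p) = _
      rw [h2]
      exact hcomm.eq
    have htop : ∀ g : C(s, ℝ), g ∈ closure (polynomialFunctions s : Set C(s, ℝ)) := by
      intro g
      have := polynomialFunctions.topologicalClosure s
      rw [← Subalgebra.topologicalClosure_coe, this]
      trivial
    exact hcl.closure_subset_iff.mpr hbase (htop _)
  · rw [cfc_apply_of_not_continuousOn a hf, mul_zero, zero_mul]

/-- If `E` is a projection in a unital C*-algebra and `E T* T E ≥ a² E` for some `a > 0`,
then there is a positive `S` in the corner `E A E` such that `T S` is a partial isometry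
with `(T S)* (T S) = E`. -/
theorem stmt3 {A : Type*} [CStarAlgebra A] [PartialOrder A] [StarOrderedRing A]
    (T E : A) (a : ℝ) (ha : 0 < a)
    (hEsa : IsSelfAdjoint E) (hEidem : IsIdempotentElem E)
    (hTE : a ^ 2 • E ≤ E * (star T * T) * E) :
    ∃ S : A, E * S * E = S ∧ 0 ≤ S ∧ star (T * S) * (T * S) = E := by
  set B := E * (star T * T) * E with hB
  have hB' : B = star (T * E) * (T * E) := by
    simp only [hB, star_mul, hEsa.star_eq]
    noncomm_ring
  have hBnonneg : 0 ≤ B := hB' ▸ star_mul_self_nonneg _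
  have hBsa : IsSelfAdjoint B := .of_nonneg hBnonneg
  set X := B + a ^ 2 • (1 - E) with hX
  have h1E : IsSelfAdjoint (1 - E) := (IsSelfAdjoint.one A).sub hEsa
  have hXsa : IsSelfAdjoint X := hBsa.add (IsSelfAdjoint.smul (star_trivial (a ^ 2)) h1E)
  have hXle : a ^ 2 • (1 : A) ≤ X := by
    have h0 : a ^ 2 • (1 : A) = a ^ 2 • E + a ^ 2 • (1 - E) := by
      rw [← smul_add]; congr 1; abel
    rw [h0, hX]
    exact add_le_add_left hTE _
  have hspec : ∀ t ∈ spectrum ℝ X, a ^ 2 ≤ t := by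
    intro t ht
    have h1 : 0 ≤ X - algebraMap ℝ A (a ^ 2) := by
      rw [Algebra.algebraMap_eq_smul_one, sub_nonneg]; exact hXle
    have h2 : t - a ^ 2 ∈ spectrum ℝ (X - algebraMap ℝ A (a ^ 2)) := by
      rw [← spectrum.sub_singleton_eq]
      exact Set.sub_mem_sub ht rfl
    linarith [spectrum_nonneg_of_nonneg h1 h2]
  have hpos : ∀ t ∈ spectrum ℝ X, 0 < t := fun t ht =>
    lt_of_lt_of_le (pow_pos ha 2) (hspec t ht)
  set f : ℝ → ℝ := fun t => (Real.sqrt t)⁻¹ with hf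
  set g : ℝ → ℝ := fun t => (Real.sqrt (Real.sqrt t))⁻¹ with hg
  have hfc : ContinuousOn f (spectrum ℝ X) :=
    ContinuousOn.inv₀ Real.continuous_sqrt.continuousOn
      (fun t ht => (Real.sqrt_pos.mpr (hpos t ht)).ne')
  have hgc : ContinuousOn g (spectrum ℝ X) :=
    ContinuousOn.inv₀ (Real.continuous_sqrt.comp Real.continuous_sqrt).continuousOn
      (fun t ht => (Real.sqrt_pos.mpr (Real.sqrt_pos.mpr (hpos t ht))).ne')
  set R := cfc f X with hR
  set Q := cfc g X with hQ
  have hRsa : IsSelfAdjoint R := cfc_predicate f X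
  have hQsa : IsSelfAdjoint Q := cfc_predicate g X
  have hQQ : Q * Q = R := by
    rw [hQ, hR, ← cfc_mul g g X hgc hgc]
    apply cfc_congr
    intro t ht
    have h0 : 0 < t := hpos t ht
    simp only [hg, hf, ← mul_inv]
    rw [Real.mul_self_sqrt (Real.sqrt_nonneg t)]
  have hRXR : R * X * R = 1 := by
    have m1 : cfc (fun t => f t * t) X = cfc f X * cfc (fun t : ℝ => t) X :=
      cfc_mul f _ X hfc continuousOn_id
    have m2 : cfc (fun t => f t * t * f t) X = cfc (fun t => f t * t) X * cfc f X :=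
      cfc_mul _ f X (hfc.mul continuousOn_id) hfc
    have m3 : cfc (fun t => f t * t * f t) X = cfc (1 : ℝ → ℝ) X := by
      apply cfc_congr
      intro t ht
      have h0 : 0 < t := hpos t ht
      have hs : Real.sqrt t ≠ 0 := (Real.sqrt_pos.mpr h0).ne'
      simp only [hf, Pi.one_apply]
      field_simp
      rw [Real.sq_sqrt h0.le]
    have hXid : cfc (fun t : ℝ => t) X = X := cfc_id' ℝ X hXsa
    have m1' : cfc (fun t => f t * t) X = cfc f X * X := by rw [m1, hXid]
    rw [hR, ← m1', ← m2, m3]; exact cfc_one ℝ X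
  have hEB : E * B = B := by rw [hB, ← mul_assoc, ← mul_assoc, hEidem.eq]
  have hBE : B * E = B := by rw [hB, mul_assoc, hEidem.eq]
  have hXE : X * E = E * X := by
    have h1 : (1 - E) * E = 0 := by
      rw [sub_mul, one_mul, hEidem.eq, sub_self]
    have h2 : E * (1 - E) = 0 := by
      rw [mul_sub, mul_one, hEidem.eq, sub_self]
    rw [hX, add_mul, mul_add, hEB, hBE, smul_mul_assoc, mul_smul_comm, h1, h2]
  have hER : E * R = R * E := commute_cfc_aux hXsa hXE f
  have hBXE : B = X * E := by rw [hXE, hX, mul_add, hEB, mul_smul_comm,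
    mul_sub, mul_one, hEidem.eq, sub_self, smul_zero, add_zero]
  clear_value B X R Q f g
  have hER' : ∀ y : A, E * (R * y) = R * (E * y) := fun y => by
    rw [← mul_assoc, hER, mul_assoc]
  refine ⟨E * R * E, ?_, ?_, ?_⟩
  · have h1 : E * (E * R * E) = E * R * E := by
      rw [← mul_assoc, ← mul_assoc, hEidem.eq]
    rw [h1, mul_assoc, hEidem.eq]
  · have key : star (Q * E) * (Q * E) = E * R * E := by
      rw [star_mul, hEsa.star_eq, hQsa.star_eq]
      calc E * Q * (Q * E) = E * (Q * Q) * E := by simp only [mul_assoc]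
        _ = E * R * E := by rw [hQQ]
    rw [← key]
    exact star_mul_self_nonneg _
  · have hSsa : star (E * R * E) = E * R * E := by
      simp only [star_mul, hEsa.star_eq, hRsa.star_eq, mul_assoc]
    have hB2 : ∀ y : A, B * y = E * (star T * (T * (E * y))) := fun y => by
      rw [hB]; simp only [mul_assoc]
    have hBXE2 : ∀ y : A, B * y = X * (E * y) := fun y => by rw [hBXE, mul_assoc]
    have hRXR2 : ∀ y : A, R * (X * (R * y)) = y := fun y => by
      have h3 : R * (X * (R * y)) = R * X * R * y := by simp only [mul_assoc]
      rw [h3, hRXR, one_mul]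
    calc star (T * (E * R * E)) * (T * (E * R * E))
        = (E * R * E) * star T * (T * (E * R * E)) := by rw [star_mul, hSsa]
      _ = E * (R * (E * (star T * (T * (E * (R * E)))))) := by simp only [mul_assoc]
      _ = E * (R * (B * (R * E))) := by rw [← hB2]
      _ = E * (R * (X * (E * (R * E)))) := by rw [hBXE2]
      _ = E * (R * (X * (R * (E * E)))) := by rw [hER' E]
      _ = E * (R * (X * (R * E))) := by rw [hEidem.eq]
      _ = E * E := by rw [hRXR2]
      _ = E := hEidem.eq
end

section
/- Let E and F be projections on a Hilbert space with E ∨ F = I. Then E − F is invertible if and only if E ∧ F = 0 and there exist bounded operators A, B with EA + FB = I. -/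
variable {H : Type*} [NormedAddCommGroup H] [InnerProductSpace ℂ H] [CompleteSpace H]

/-- For projections `E`, `F` with `E ∨ F = 1`: `E - F` is invertible iff `E ∧ F = 0`
and `E A + F B = 1` for some bounded operators `A`, `B`. -/
theorem stmt7 (E F : H →L[ℂ] H)
    (hEsa : IsSelfAdjoint E) (hEidem : IsIdempotentElem E)
    (hFsa : IsSelfAdjoint F) (hFidem : IsIdempotentElem F)
    (hjoin : (LinearMap.range (E : H →ₗ[ℂ] H) ⊔ LinearMap.range (F : H →ₗ[ℂ] H)).topologicalClosure = ⊤) :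
    IsUnit (E - F) ↔
      (LinearMap.range (E : H →ₗ[ℂ] H) ⊓ LinearMap.range (F : H →ₗ[ℂ] H) = ⊥ ∧
        ∃ A B : H →L[ℂ] H, E * A + F * B = 1) := by
  have hEfix : ∀ x, x ∈ LinearMap.range (E : H →ₗ[ℂ] H) → E x = x := by
    rintro x ⟨y, rfl⟩
    have := congrFun (congrArg (fun (G : H →L[ℂ] H) => (G : H → H)) hEidem) y
    simpa using this
  have hFfix : ∀ x, x ∈ LinearMap.range (F : H →ₗ[ℂ] H) → F x = x := by
    rintro x ⟨y, rfl⟩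
    have := congrFun (congrArg (fun (G : H →L[ℂ] H) => (G : H → H)) hFidem) y
    simpa using this
  constructor
  · rintro ⟨u, hu⟩
    constructor
    · rw [Submodule.eq_bot_iff]
      intro x hx
      have hE : E x = x := hEfix x hx.1
      have hF : F x = x := hFfix x hx.2
      have h0 : (E - F) x = 0 := by simp [hE, hF]
      have : ((↑u⁻¹ : H →L[ℂ] H) * (E - F)) x = x := by
        rw [← hu]
        have h1 : (↑u⁻¹ : H →L[ℂ] H) * ↑u = 1 := u.inv_mul
        rw [h1]; rfl
      simpa [ContinuousLinearMap.mul_apply, h0] using this.symm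
    · refine ⟨↑u⁻¹, -↑u⁻¹, ?_⟩
      have h1 : (E - F) * ↑u⁻¹ = 1 := by rw [← hu]; exact u.mul_inv
      calc E * ↑u⁻¹ + F * -↑u⁻¹ = (E - F) * ↑u⁻¹ := by noncomm_ring
        _ = 1 := h1
  · rintro ⟨hinf, A, B, hAB⟩
    set M : Submodule ℂ H := LinearMap.range (E : H →ₗ[ℂ] H) with hM
    set N : Submodule ℂ H := LinearMap.range (F : H →ₗ[ℂ] H) with hN
    have hMc : IsClosed (M : Set H) := by
      have : (M : Set H) = {x | E x = x} := by
        ext x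
        exact ⟨fun hx => hEfix x hx, fun hx => ⟨x, hx⟩⟩
      rw [this]
      exact isClosed_eq E.continuous continuous_id
    have hNc : IsClosed (N : Set H) := by
      have : (N : Set H) = {x | F x = x} := by
        ext x
        exact ⟨fun hx => hFfix x hx, fun hx => ⟨x, hx⟩⟩
      rw [this]
      exact isClosed_eq F.continuous continuous_id
    have hdecomp : ∀ x : H, E (A x) + F (B x) = x := by
      intro x
      have := congrFun (congrArg (fun (G : H →L[ℂ] H) => (G : H → H)) hAB) x
      simpa using this
    have hcompl : IsCompl M N := by
      constructor
      · rw [disjoint_iff]; exact hinf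
      · rw [codisjoint_iff, eq_top_iff]
        intro x _
        rw [Submodule.mem_sup]
        exact ⟨E (A x), ⟨A x, rfl⟩, F (B x), ⟨B x, rfl⟩, hdecomp x⟩
    set R : H →L[ℂ] H := M.subtypeL.comp (M.linearProjOfClosedCompl N hcompl hMc hNc) with hR
    have hRmem : ∀ x, x ∈ M → R x = x := by
      intro x hx
      have : (M.linearProjOfIsCompl N hcompl) x = ⟨x, hx⟩ :=
        Submodule.linearProjOfIsCompl_apply_left hcompl ⟨x, hx⟩
      simp [hR, Submodule.coe_continuous_linearProjOfClosedCompl', this, hx]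
    have hRker : ∀ x, x ∈ N → R x = 0 := by
      intro x hx
      have : (M.linearProjOfIsCompl N hcompl) x = 0 :=
        Submodule.linearProjOfIsCompl_apply_right hcompl ⟨x, hx⟩
      simp [hR, Submodule.coe_continuous_linearProjOfClosedCompl', this, hx]
    set T : H →L[ℂ] H := E - F with hT
    have hTsa : IsSelfAdjoint T := hEsa.sub hFsa
    have hRT : R * T = E := by
      ext x
      simp only [ContinuousLinearMap.mul_apply, hT, ContinuousLinearMap.sub_apply, map_sub]
      rw [hRmem (E x) ⟨x, rfl⟩, hRker (F x) ⟨x, rfl⟩, sub_zero]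
    have hTR : T * ContinuousLinearMap.adjoint R = E := by
      have hRT2 : R.comp T = E := hRT
      have := congrArg ContinuousLinearMap.adjoint hRT2
      rw [ContinuousLinearMap.adjoint_comp, hTsa.adjoint_eq, hEsa.adjoint_eq] at this
      exact this
    have hTR' : T * (ContinuousLinearMap.adjoint R - 1) = F := by
      rw [mul_sub, hTR, mul_one, hT, sub_sub_cancel]
    have hsurj : Function.Surjective T := by
      intro y
      refine ⟨(ContinuousLinearMap.adjoint R) (A y) +
        (ContinuousLinearMap.adjoint R - 1) (B y), ?_⟩
      rw [map_add]
      have h1 : T ((ContinuousLinearMap.adjoint R) (A y)) = E (A y) := by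
        have := congrFun (congrArg (fun (G : H →L[ℂ] H) => (G : H → H)) hTR) (A y)
        simpa using this
      have h2 : T ((ContinuousLinearMap.adjoint R - 1) (B y)) = F (B y) := by
        have := congrFun (congrArg (fun (G : H →L[ℂ] H) => (G : H → H)) hTR') (B y)
        simpa using this
      rw [h1, h2, hdecomp]
    have hker : ∀ x : H, T x = 0 → x = 0 := by
      intro x hx0
      obtain ⟨z, hz⟩ := hsurj x
      have : (inner ℂ x x : ℂ) = 0 := by
        calc (inner ℂ x x : ℂ) = inner ℂ x (T z) := by rw [hz]
          _ = inner ℂ (T x) z :=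
              (ContinuousLinearMap.isSelfAdjoint_iff_isSymmetric.mp hTsa x z).symm
          _ = 0 := by rw [hx0]; simp
      exact inner_self_eq_zero.mp this
    have hinj : Function.Injective T := fun a b hab =>
      sub_eq_zero.mp (hker _ (by rw [map_sub, hab, sub_self]))
    exact ContinuousLinearMap.isUnit_iff_bijective.mpr ⟨hinj, hsurj⟩
end

section
/- Let T be a bounded operator on a Hilbert space H and E a projection such that: (a) E T* T E ≥ a₁² E and E^⊥ T* T E^⊥ ≥ a₂² E^⊥ for some a₁, a₂ > 0, and (b) the difference of the range projections of TE and TE^⊥ is invertible on the closure of the range of T. Then T is left invertible, i.e., there exists S with ST = I. -/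
open scoped InnerProductSpace

variable {H : Type*} [NormedAddCommGroup H] [InnerProductSpace ℂ H] [CompleteSpace H]

/-- The orthogonal projection onto the closure of the range of a bounded operator. -/
noncomputable def rangeProj (T : H →L[ℂ] H) : H →L[ℂ] H :=
  (LinearMap.range (T : H →ₗ[ℂ] H)).topologicalClosure.subtypeL ∘L
    Submodule.orthogonalProjectionOnto (LinearMap.range (T : H →ₗ[ℂ] H)).topologicalClosure

lemma sa_inner_swap {A : H →L[ℂ] H} (hA : IsSelfAdjoint A) (x y : H) :
    ⟪A x, y⟫_ℂ = ⟪x, A y⟫_ℂ := by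
  conv_lhs => rw [← hA.adjoint_eq]
  exact ContinuousLinearMap.adjoint_inner_left A y x

lemma rangeProj_apply_of_mem {A : H →L[ℂ] H} {y : H}
    (hy : y ∈ (LinearMap.range (A : H →ₗ[ℂ] H)).topologicalClosure) : rangeProj A y = y := by
  simpa [rangeProj] using Submodule.starProjection_eq_self_iff.mpr hy

lemma mem_range_closure (A : H →L[ℂ] H) (x : H) :
    A x ∈ (LinearMap.range (A : H →ₗ[ℂ] H)).topologicalClosure :=
  Submodule.le_topologicalClosure _ ⟨x, rfl⟩

lemma rangeProj_apply_apply (A : H →L[ℂ] H) (x : H) : rangeProj A (A x) = A x :=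
  rangeProj_apply_of_mem (mem_range_closure A x)

lemma rangeProj_inner_eq_zero (A : H →L[ℂ] H) (y : H) {z : H}
    (hz : z ∈ (LinearMap.range (A : H →ₗ[ℂ] H)).topologicalClosure) :
    ⟪y - rangeProj A y, z⟫_ℂ = 0 :=
  Submodule.starProjection_inner_eq_zero y z hz

lemma rangeProj_pyth (A : H →L[ℂ] H) (y : H) :
    ‖rangeProj A y‖ ^ 2 + ‖y - rangeProj A y‖ ^ 2 = ‖y‖ ^ 2 := by
  have h0 : ⟪y - rangeProj A y, rangeProj A y⟫_ℂ = 0 :=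
    rangeProj_inner_eq_zero A y (Submodule.orthogonalProjectionOnto _ y).2
  have h1 : ⟪rangeProj A y, y - rangeProj A y⟫_ℂ = 0 := inner_eq_zero_symm.mp h0
  have h2 := norm_add_sq (𝕜 := ℂ) (rangeProj A y) (y - rangeProj A y)
  rw [add_sub_cancel, h1] at h2
  simp at h2
  linarith

set_option maxHeartbeats 1000000 in
/-- If `E T* T E ≥ a₁² E`, `E^⊥ T* T E^⊥ ≥ a₂² E^⊥` and the difference of the range
projections of `T E` and `T E^⊥` is invertible in the corner determined by the range
projection of `T`, then `T` is left invertible. -/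
theorem stmt8 (T E : H →L[ℂ] H)
    (hEsa : IsSelfAdjoint E) (hEidem : IsIdempotentElem E)
    (a₁ a₂ : ℝ) (ha₁ : 0 < a₁) (ha₂ : 0 < a₂)
    (h1 : a₁ ^ 2 • E ≤ E * (star T * T) * E)
    (h2 : a₂ ^ 2 • (1 - E) ≤ (1 - E) * (star T * T) * (1 - E))
    (hb : ∃ S : H →L[ℂ] H, rangeProj T * S * rangeProj T = S ∧
      S * (rangeProj (T * E) - rangeProj (T * (1 - E))) = rangeProj T ∧
      (rangeProj (T * E) - rangeProj (T * (1 - E))) * S = rangeProj T) :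
    ∃ S : H →L[ℂ] H, S * T = 1 := by
  obtain ⟨S, -, hS2, -⟩ := hb
  -- lower bounds from h1 and h2
  have lower : ∀ (W : H →L[ℂ] H), IsSelfAdjoint W → IsIdempotentElem W → ∀ (a : ℝ),
      a ^ 2 • W ≤ W * (star T * T) * W → ∀ x, a ^ 2 * ‖W x‖ ^ 2 ≤ ‖T (W x)‖ ^ 2 := by
    intro W hW hWidem a hle x
    have hpos := (ContinuousLinearMap.le_def _ _).mp hle
    have h0 := hpos.inner_nonneg_left x
    have e1 : ⟪(W * (star T * T) * W) x, x⟫_ℂ = ((‖T (W x)‖ ^ 2 : ℝ) : ℂ) := by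
      simp only [ContinuousLinearMap.mul_apply]
      rw [sa_inner_swap hW, ContinuousLinearMap.star_eq_adjoint,
        ContinuousLinearMap.adjoint_inner_left, inner_self_eq_norm_sq_to_K]
      norm_cast
    have eWx : ⟪W x, x⟫_ℂ = ((‖W x‖ ^ 2 : ℝ) : ℂ) := by
      have hww : W x = W (W x) := by
        conv_lhs => rw [← hWidem.eq]
        simp [ContinuousLinearMap.mul_apply]
      conv_lhs => rw [hww]
      rw [sa_inner_swap hW, inner_self_eq_norm_sq_to_K]
      norm_cast
    have e2 : ⟪(a ^ 2 • W) x, x⟫_ℂ = ((a ^ 2 * ‖W x‖ ^ 2 : ℝ) : ℂ) := by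
      rw [ContinuousLinearMap.smul_apply]
      have hs : (a ^ 2 : ℝ) • W x = ((a ^ 2 : ℝ) : ℂ) • W x := by
        rw [← smul_one_smul ℂ (a ^ 2 : ℝ) (W x)]
        norm_num
      rw [hs, inner_smul_left, eWx, Complex.conj_ofReal]
      push_cast
      ring
    have e3 : ⟪(W * (star T * T) * W - a ^ 2 • W) x, x⟫_ℂ
        = ((‖T (W x)‖ ^ 2 - a ^ 2 * ‖W x‖ ^ 2 : ℝ) : ℂ) := by
      rw [ContinuousLinearMap.sub_apply, inner_sub_left, e1, e2]
      push_cast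
      ring
    rw [e3, Complex.zero_le_real] at h0
    linarith
  have hFsa : IsSelfAdjoint (1 - E : H →L[ℂ] H) := (IsSelfAdjoint.one _).sub hEsa
  have hFidem : IsIdempotentElem (1 - E : H →L[ℂ] H) := hEidem.one_sub
  have f1 := lower E hEsa hEidem a₁ h1
  have f2 := lower (1 - E) hFsa hFidem a₂ h2
  -- angle constant
  set M : ℝ := max ‖S‖ 1 with hM
  have hM1 : (1 : ℝ) ≤ M := le_max_right _ _
  have hM0 : (0 : ℝ) < M := lt_of_lt_of_le one_pos hM1
  have hsub : 0 ≤ 1 - 1 / M ^ 2 := by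
    have h : 1 / M ^ 2 ≤ 1 := by
      rw [div_le_one (by positivity)]; nlinarith
    linarith
  set k : ℝ := Real.sqrt (1 - 1 / M ^ 2) with hk
  have hk0 : 0 ≤ k := Real.sqrt_nonneg _
  have hksq : k ^ 2 = 1 - 1 / M ^ 2 := Real.sq_sqrt hsub
  have hk1 : k < 1 := by nlinarith [one_div_pos.mpr (pow_pos hM0 2)]
  set m : ℝ := min (a₁ ^ 2) (a₂ ^ 2) with hm
  have hm0 : 0 < m := lt_min (by positivity) (by positivity)
  have hc : 0 < (1 - k) * m := mul_pos (by linarith) hm0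
  -- the key pointwise estimate
  have key : ∀ x : H, ((1 - k) * m) * ‖x‖ ^ 2 ≤ ‖T x‖ ^ 2 := by
    intro x
    set u : H := E x with hu
    set v : H := (1 - E) x with hv
    have huv : u + v = x := by simp [hu, hv]
    set p : H := T u with hp
    set q : H := T v with hq
    have hTx : T x = p + q := by rw [← huv, map_add]
    -- Pythagoras for x
    have hx2 : ‖u‖ ^ 2 + ‖v‖ ^ 2 = ‖x‖ ^ 2 := by
      have hEF : E * (1 - E) = 0 := by
        rw [mul_sub, mul_one, hEidem.eq, sub_self]
      have h0 : ⟪u, v⟫_ℂ = 0 := by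
        rw [hu, hv, sa_inner_swap hEsa, ← ContinuousLinearMap.mul_apply, hEF]
        simp
      have := norm_add_sq (𝕜 := ℂ) u v
      rw [huv, h0] at this
      simp at this
      linarith
    -- the angle estimate : ‖Q p‖ ≤ k ‖p‖
    set P : H →L[ℂ] H := rangeProj (T * E) with hPd
    set Q : H →L[ℂ] H := rangeProj (T * (1 - E)) with hQd
    have hpP : P p = p := by
      have := rangeProj_apply_apply (T * E) x
      simpa [ContinuousLinearMap.mul_apply, hp, hu] using this
    have hpL : rangeProj T p = p := rangeProj_apply_apply T u
    have hlow : ‖p‖ ≤ M * ‖p - Q p‖ := by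
      have h5 := ContinuousLinearMap.ext_iff.mp hS2 p
      simp only [ContinuousLinearMap.mul_apply, ContinuousLinearMap.sub_apply, hpP, hpL] at h5
      calc ‖p‖ = ‖S (p - Q p)‖ := by rw [h5]
        _ ≤ ‖S‖ * ‖p - Q p‖ := S.le_opNorm _
        _ ≤ M * ‖p - Q p‖ :=
            mul_le_mul_of_nonneg_right (le_max_left _ _) (norm_nonneg _)
    have hpyth := rangeProj_pyth (T * (1 - E)) p
    rw [← hQd] at hpyth
    have hQp : ‖Q p‖ ≤ k * ‖p‖ := by
      have hsq : ‖Q p‖ ^ 2 ≤ (k * ‖p‖) ^ 2 := by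
        have hM2 : ‖p‖ ^ 2 ≤ M ^ 2 * ‖p - Q p‖ ^ 2 := by nlinarith [norm_nonneg p, norm_nonneg (p - Q p)]
        have h9 : ‖p‖ ^ 2 / M ^ 2 ≤ ‖p - Q p‖ ^ 2 := by
          rw [div_le_iff₀ (by positivity)]; nlinarith
        have h10 : k ^ 2 * ‖p‖ ^ 2 = ‖p‖ ^ 2 - ‖p‖ ^ 2 / M ^ 2 := by
          rw [hksq]; field_simp
        nlinarith [h9, h10]
      have := Real.sqrt_le_sqrt hsq
      rwa [Real.sqrt_sq (norm_nonneg _), Real.sqrt_sq (by positivity)] at this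
    -- bound on the inner product
    have hpq : -(k * ‖p‖ * ‖q‖) ≤ RCLike.re ⟪p, q⟫_ℂ := by
      have hqmem : (T * (1 - E)) x ∈ (LinearMap.range ((T * (1 - E) : H →L[ℂ] H) : H →ₗ[ℂ] H)).topologicalClosure :=
        mem_range_closure (T * (1 - E)) x
      have h6 : ⟪p - Q p, q⟫_ℂ = 0 := by
        have := rangeProj_inner_eq_zero (T * (1 - E)) p hqmem
        rwa [show (T * (1 - E)) x = q from rfl] at this
      have h7 : ⟪p, q⟫_ℂ = ⟪Q p, q⟫_ℂ := by
        have := inner_sub_left (𝕜 := ℂ) p (Q p) q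
        rw [h6] at this
        linear_combination -this
      have h8 : |RCLike.re ⟪p, q⟫_ℂ| ≤ k * ‖p‖ * ‖q‖ := by
        calc |RCLike.re ⟪p, q⟫_ℂ| ≤ ‖⟪p, q⟫_ℂ‖ := RCLike.abs_re_le_norm _
          _ = ‖⟪Q p, q⟫_ℂ‖ := by rw [h7]
          _ ≤ ‖Q p‖ * ‖q‖ := norm_inner_le_norm _ _
          _ ≤ k * ‖p‖ * ‖q‖ :=
              mul_le_mul_of_nonneg_right hQp (norm_nonneg _)
      linarith [neg_abs_le (RCLike.re ⟪p, q⟫_ℂ)]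
    -- put it together
    have hsum := norm_add_sq (𝕜 := ℂ) p q
    rw [← hTx] at hsum
    have g1 := f1 x
    have g2 := f2 x
    rw [← hu, ← hp] at g1
    rw [← hv, ← hq] at g2
    have hm1 : m ≤ a₁ ^ 2 := min_le_left _ _
    have hm2 : m ≤ a₂ ^ 2 := min_le_right _ _
    have s1 : ‖p‖ ^ 2 + ‖q‖ ^ 2 - 2 * (k * ‖p‖ * ‖q‖) ≤ ‖T x‖ ^ 2 := by
      rw [hsum]; linarith [hpq]
    have s2 : (1 - k) * (‖p‖ ^ 2 + ‖q‖ ^ 2) ≤ ‖p‖ ^ 2 + ‖q‖ ^ 2 - 2 * (k * ‖p‖ * ‖q‖) := by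
      nlinarith [mul_nonneg hk0 (sq_nonneg (‖p‖ - ‖q‖))]
    have s3 : m * ‖x‖ ^ 2 ≤ ‖p‖ ^ 2 + ‖q‖ ^ 2 := by
      rw [← hx2]
      nlinarith [mul_nonneg (sub_nonneg.mpr hm1) (sq_nonneg ‖u‖),
        mul_nonneg (sub_nonneg.mpr hm2) (sq_nonneg ‖v‖)]
    have s4 : (1 - k) * (m * ‖x‖ ^ 2) ≤ (1 - k) * (‖p‖ ^ 2 + ‖q‖ ^ 2) :=
      mul_le_mul_of_nonneg_left s3 (by linarith)
    nlinarith [s1, s2, s4]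
  -- conclude : star T * T is a unit
  have hIsUnit : IsUnit (star T * T) := by
    refine ContinuousLinearMap.isUnit_of_forall_le_norm_inner_map _
      (c := ⟨(1 - k) * m, hc.le⟩) (by exact_mod_cast hc) fun x => ?_
    have e : ⟪(star T * T) x, x⟫_ℂ = ((‖T x‖ ^ 2 : ℝ) : ℂ) := by
      rw [ContinuousLinearMap.mul_apply, ContinuousLinearMap.star_eq_adjoint,
        ContinuousLinearMap.adjoint_inner_left, inner_self_eq_norm_sq_to_K]
      norm_cast
    rw [e]
    have hnn : ‖((‖T x‖ ^ 2 : ℝ) : ℂ)‖ = ‖T x‖ ^ 2 := by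
      rw [Complex.norm_real, Real.norm_eq_abs, abs_of_nonneg (show (0:ℝ) ≤ ‖T x‖ ^ 2 by positivity)]
    rw [hnn]
    have := key x
    rw [mul_comm]
    exact this
  obtain ⟨w, hw⟩ := hIsUnit
  refine ⟨(↑w⁻¹ : H →L[ℂ] H) * star T, ?_⟩
  rw [mul_assoc, ← hw, Units.inv_mul]
end

section
/- Let M be a von Neumann algebra, E a projection in M, T, A ∈ M with ‖A‖ < c and ‖(T + A)E‖ < c − ‖A‖ for some c > 0. Let F be the spectral projection of |T| for the interval [0, c]. Then E ∧ F^⊥ = 0, and consequently E is equivalent to a subprojection of F (E ≼ F). -/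
variable {H : Type*} [NormedAddCommGroup H] [InnerProductSpace ℂ H] [CompleteSpace H]

/-- The absolute value `|T| = (T* T)^{1/2}` of a bounded operator. -/
noncomputable def absCLM (T : H →L[ℂ] H) : H →L[ℂ] H :=
  cfc Real.sqrt (star T * T)

/-- The spectral projection of a self-adjoint operator `X` for the interval `(c, ∞)`,
realized as the range projection of `f(X)` where `f x = max (x - c) 0`. -/
noncomputable def specGT (X : H →L[ℂ] H) (c : ℝ) : H →L[ℂ] H :=
  rangeProj (cfc (fun x : ℝ => max (x - c) 0) X)

/-- `P` is a finite projection relative to the von Neumann algebra `M`: any partial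
isometry in `M` from `P` onto a subprojection of `P` is onto `P` itself. -/
def FiniteProj (M : VonNeumannAlgebra H) (P : H →L[ℂ] H) : Prop :=
  ∀ V ∈ M, star V * V = P → P * (V * star V) = V * star V → V * star V = P

/-- The norm-closed two-sided ideal of `M` generated by the finite projections of `M`
(the "compact" operators relative to `M`). -/
noncomputable def cptIdeal (M : VonNeumannAlgebra H) : Set (H →L[ℂ] H) :=
  closure (Submodule.span ℂ {x : H →L[ℂ] H | ∃ a ∈ M, ∃ b ∈ M, ∃ P ∈ M,
    IsSelfAdjoint P ∧ IsIdempotentElem P ∧ FiniteProj M P ∧ x = a * P * b} :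
      Set (H →L[ℂ] H))

section Stmt16Aux

set_option linter.unusedSectionVars false

local notation "⟪" x ", " y "⟫" => @inner ℂ _ _ x y

lemma absCLM_isSelfAdjoint (W : H →L[ℂ] H) : IsSelfAdjoint (absCLM W) := cfc_predicate _ _

lemma absCLM_sq (W : H →L[ℂ] H) : absCLM W * absCLM W = star W * W := by
  have hsa : IsSelfAdjoint (star W * W) := IsSelfAdjoint.star_mul_self W
  rw [absCLM, ← cfc_mul _ _ _ Real.continuous_sqrt.continuousOn Real.continuous_sqrt.continuousOn]
  calc cfc (fun x => Real.sqrt x * Real.sqrt x) (star W * W)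
      = cfc (id : ℝ → ℝ) (star W * W) := by
        apply cfc_congr
        intro x hx
        have h0 : (0:ℝ) ≤ x := spectrum_nonneg_of_nonneg (star_mul_self_nonneg W) hx
        simp [Real.mul_self_sqrt h0]
    _ = star W * W := cfc_id ℝ _

lemma inner_absCLM (W : H →L[ℂ] H) (x y : H) :
    ⟪absCLM W x, absCLM W y⟫ = ⟪W x, W y⟫ := by
  have h1 : absCLM W x = ContinuousLinearMap.adjoint (absCLM W) x := by
    rw [← ContinuousLinearMap.star_eq_adjoint, (absCLM_isSelfAdjoint W).star_eq]
  rw [h1, ContinuousLinearMap.adjoint_inner_left]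
  have h2 : absCLM W (absCLM W y) = ContinuousLinearMap.adjoint W (W y) := by
    rw [← ContinuousLinearMap.star_eq_adjoint, ← ContinuousLinearMap.mul_apply,
      ← ContinuousLinearMap.mul_apply, absCLM_sq]
  rw [h2, ContinuousLinearMap.adjoint_inner_right]

lemma norm_absCLM (W : H →L[ℂ] H) (x : H) : ‖absCLM W x‖ = ‖W x‖ := by
  have h := inner_absCLM W x x
  rw [inner_self_eq_norm_sq_to_K, inner_self_eq_norm_sq_to_K] at h
  have h2 : (‖absCLM W x‖ : ℝ) ^ 2 = ‖W x‖ ^ 2 := by exact_mod_cast h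
  rw [← Real.sqrt_sq (norm_nonneg (absCLM W x)), ← Real.sqrt_sq (norm_nonneg (W x)), h2]

lemma commute_cfc {a u : H →L[ℂ] H} (ha : IsSelfAdjoint a) (h : u * a = a * u) (f : ℝ → ℝ) :
    u * cfc f a = cfc f a * u := by
  by_cases hf : ContinuousOn f (spectrum ℝ a)
  · rw [cfc_apply f a ha hf]
    suffices hmain : ∀ g : C(spectrum ℝ a, ℝ), u * cfcHom ha g = cfcHom ha g * u from hmain _
    intro g
    set S : Subalgebra ℝ C(spectrum ℝ a, ℝ) :=
      (Subalgebra.centralizer ℝ {u}).comap (cfcHom ha (R := ℝ)).toAlgHom with hS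
    have hmem : ∀ g' : C(spectrum ℝ a, ℝ), g' ∈ S ↔ u * cfcHom ha g' = cfcHom ha g' * u := by
      intro g'
      simp [hS, Subalgebra.mem_comap, Subalgebra.mem_centralizer_iff]
    have hSclosed : IsClosed (S : Set C(spectrum ℝ a, ℝ)) := by
      have : (S : Set _) = ⇑(cfcHom ha (R := ℝ)) ⁻¹' {x | u * x = x * u} := by
        ext g'; simpa using hmem g'
      rw [this]
      exact (isClosed_eq (continuous_mul_left u) (continuous_mul_right u)).preimage
        (cfcHom_continuous ha)
    have hle : polynomialFunctions (spectrum ℝ a) ≤ S := by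
      rw [polynomialFunctions.eq_adjoin_X]
      apply Algebra.adjoin_le
      intro x hx
      rw [Set.mem_singleton_iff] at hx
      subst hx
      rw [SetLike.mem_coe, hmem]
      have hXid : (Polynomial.toContinuousMapOnAlgHom (spectrum ℝ a)) Polynomial.X
          = (ContinuousMap.id ℝ).restrict (spectrum ℝ a) := by
        ext x; simp
      rw [hXid, cfcHom_id ha, h]
    have htop := (polynomialFunctions (spectrum ℝ a)).topologicalClosure_minimal hle hSclosed
    rw [polynomialFunctions.topologicalClosure] at htop
    exact (hmem g).mp (htop (by trivial))
  · rw [cfc_apply_of_not_continuousOn a hf, mul_zero, zero_mul]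

section Proj

variable (K : Submodule ℂ H) [CompleteSpace K]

lemma projCLM_apply_mem (x : H) : (K.subtypeL ∘L Submodule.orthogonalProjectionOnto K) x ∈ K :=
  (Submodule.orthogonalProjectionOnto K x).2

variable {K}

lemma projCLM_eq_self {x : H} (hx : x ∈ K) : (K.subtypeL ∘L Submodule.orthogonalProjectionOnto K) x = x :=
  Submodule.starProjection_eq_self_iff.mpr hx

lemma projCLM_eq_zero {x : H} (hx : x ∈ Kᗮ) : (K.subtypeL ∘L Submodule.orthogonalProjectionOnto K) x = 0 := by
  have := Submodule.orthogonalProjectionOnto_apply_of_mem_orthogonal hx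
  simp [ContinuousLinearMap.comp_apply, this]

lemma projCLM_sub_mem (x : H) : x - (K.subtypeL ∘L Submodule.orthogonalProjectionOnto K) x ∈ Kᗮ :=
  Submodule.sub_starProjection_mem_orthogonal x

lemma projCLM_idem : (K.subtypeL ∘L Submodule.orthogonalProjectionOnto K) * (K.subtypeL ∘L Submodule.orthogonalProjectionOnto K)
    = K.subtypeL ∘L Submodule.orthogonalProjectionOnto K := by
  ext x
  exact projCLM_eq_self (projCLM_apply_mem K x)

lemma commute_projCLM {u : H →L[ℂ] H}
    (h1 : ∀ x ∈ K, u x ∈ K) (h2 : ∀ x ∈ K, star u x ∈ K) :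
    u * (K.subtypeL ∘L Submodule.orthogonalProjectionOnto K) = (K.subtypeL ∘L Submodule.orthogonalProjectionOnto K) * u := by
  set P := K.subtypeL ∘L Submodule.orthogonalProjectionOnto K with hP
  ext x
  have horth : u (x - P x) ∈ Kᗮ := by
    rw [Submodule.mem_orthogonal]
    intro w hw
    calc ⟪w, u (x - P x)⟫ = ⟪star u w, x - P x⟫ := by
          rw [ContinuousLinearMap.star_eq_adjoint, ContinuousLinearMap.adjoint_inner_left]
      _ = 0 := (Submodule.mem_orthogonal K _).mp (projCLM_sub_mem x) _ (h2 w hw)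
  have hx : u x = u (P x) + u (x - P x) := by rw [← map_add]; congr 1; abel
  calc (u * P) x = u (P x) := rfl
    _ = P (u (P x)) + P (u (x - P x)) := by
        rw [projCLM_eq_self (h1 _ (projCLM_apply_mem K x)), projCLM_eq_zero horth, add_zero]
    _ = P (u x) := by rw [← map_add, ← hx]
    _ = (P * u) x := rfl

end Proj

lemma range_rangeProj (G : H →L[ℂ] H) :
    LinearMap.range (rangeProj G : H →ₗ[ℂ] H) = (LinearMap.range (G : H →ₗ[ℂ] H)).topologicalClosure := by
  apply le_antisymm
  · rintro _ ⟨x, rfl⟩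
    exact projCLM_apply_mem _ x
  · intro y hy
    exact ⟨y, projCLM_eq_self hy⟩

lemma rangeProj_isSelfAdjoint (G : H →L[ℂ] H) : IsSelfAdjoint (rangeProj G) :=
  isSelfAdjoint_starProjection (LinearMap.range (G : H →ₗ[ℂ] H)).topologicalClosure

lemma rangeProj_idem (G : H →L[ℂ] H) : rangeProj G * rangeProj G = rangeProj G :=
  projCLM_idem

lemma maps_topologicalClosure_range {v G : H →L[ℂ] H} (h : v * G = G * v) :
    ∀ y ∈ (LinearMap.range (G : H →ₗ[ℂ] H)).topologicalClosure, v y ∈ (LinearMap.range (G : H →ₗ[ℂ] H)).topologicalClosure := by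
  intro y hy
  have h1 : v '' ((LinearMap.range (G : H →ₗ[ℂ] H) : Submodule ℂ H) : Set H)
      ⊆ ((LinearMap.range (G : H →ₗ[ℂ] H) : Submodule ℂ H) : Set H) := by
    rintro _ ⟨w, ⟨t, rfl⟩, rfl⟩
    refine ⟨v t, ?_⟩
    calc G (v t) = (G * v) t := rfl
      _ = (v * G) t := by rw [h]
      _ = v (G t) := rfl
  have hy' : y ∈ closure ((LinearMap.range (G : H →ₗ[ℂ] H) : Submodule ℂ H) : Set H) := by
    rw [← Submodule.topologicalClosure_coe]; exact hy
  show v y ∈ ((LinearMap.range (G : H →ₗ[ℂ] H)).topologicalClosure : Set H)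
  rw [Submodule.topologicalClosure_coe]
  exact closure_mono h1 (image_closure_subset_closure_image v.continuous ⟨y, hy', rfl⟩)

lemma ker_eq_orth_range {S : H →L[ℂ] H} (hS : IsSelfAdjoint S) :
    LinearMap.ker (S : H →ₗ[ℂ] H) = (LinearMap.range (S : H →ₗ[ℂ] H))ᗮ := by
  have hadj : ContinuousLinearMap.adjoint S = S := by
    rw [← ContinuousLinearMap.star_eq_adjoint, hS.star_eq]
  ext z
  simp only [LinearMap.mem_ker, Submodule.mem_orthogonal]
  constructor
  · intro hz w hw
    obtain ⟨y, rfl⟩ := hw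
    have h := ContinuousLinearMap.adjoint_inner_left S z y
    rw [hadj] at h
    rw [ContinuousLinearMap.coe_coe] at hz ⊢
    rw [h, hz, inner_zero_right]
  · intro hz
    have h0 : ⟪S (S z), z⟫ = 0 := hz _ ⟨S z, rfl⟩
    have h := ContinuousLinearMap.adjoint_inner_left S z (S z)
    rw [hadj] at h
    rw [h] at h0
    exact inner_self_eq_zero.mp h0

lemma lower_bound {X : H →L[ℂ] H} (hX : IsSelfAdjoint X) (c : ℝ) :
    ∀ x ∈ (LinearMap.range ((cfc (fun t : ℝ => max (t - c) 0) X : H →L[ℂ] H) : H →ₗ[ℂ] H)).topologicalClosure,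
      c * ‖x‖ ^ 2 ≤ RCLike.re ⟪x, X x⟫ := by
  set g : ℝ → ℝ := fun t => max (t - c) 0 with hg
  have hgc : Continuous g := by fun_prop
  set G := cfc g X with hG
  have hGsa : IsSelfAdjoint G := cfc_predicate _ _
  have hGadj : ContinuousLinearMap.adjoint G = G := by
    rw [← ContinuousLinearMap.star_eq_adjoint, hGsa.star_eq]
  have hD : (0 : H →L[ℂ] H) ≤ cfc (fun t => g t * ((t - c) * g t)) X := by
    apply cfc_nonneg
    intro t _
    rcases le_total t c with h | h
    · have h0 : g t = 0 := max_eq_right (by linarith)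
      simp [h0]
    · have h0 : g t = t - c := max_eq_left (by linarith)
      rw [h0]; nlinarith
  have hsubc : cfc (fun t : ℝ => t - c) X = X - c • 1 := by
    have h1 : cfc (fun t : ℝ => t - c) X
        = cfc (fun t : ℝ => t) X - cfc (fun _ : ℝ => c) X := by
      exact cfc_sub _ _ X (by fun_prop) (by fun_prop)
    rw [h1, cfc_id' ℝ X, cfc_const c X, Algebra.algebraMap_eq_smul_one]
  have hfactor : cfc (fun t => g t * ((t - c) * g t)) X = G * ((X - c • 1) * G) := by
    rw [cfc_mul _ _ X (by fun_prop) (by fun_prop), cfc_mul _ _ X (by fun_prop) (by fun_prop),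
      hsubc]
  have hmain : ∀ y : H, c * ‖G y‖ ^ 2 ≤ RCLike.re ⟪G y, X (G y)⟫ := by
    intro y
    have hpos := (ContinuousLinearMap.nonneg_iff_isPositive _).mp hD
    have h0 : (0:ℝ) ≤ RCLike.re ⟪y, (G * ((X - c • 1) * G)) y⟫ := by
      rw [← hfactor]
      exact hpos.re_inner_nonneg_right y
    have h1 : ⟪y, (G * ((X - c • 1) * G)) y⟫ = ⟪G y, (X - c • 1) (G y)⟫ := by
      calc ⟪y, (G * ((X - c • 1) * G)) y⟫
          = ⟪y, ContinuousLinearMap.adjoint G ((X - c • 1) (G y))⟫ := by rw [hGadj]; rfl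
        _ = ⟪G y, (X - c • 1) (G y)⟫ := ContinuousLinearMap.adjoint_inner_right G y _
    rw [h1] at h0
    have h2 : (X - c • 1) (G y) = X (G y) - c • (G y) := by
      simp [ContinuousLinearMap.sub_apply]
    rw [h2, inner_sub_right, RCLike.real_smul_eq_coe_smul (K := ℂ), inner_smul_right,
      map_sub, RCLike.re_ofReal_mul, inner_self_eq_norm_sq] at h0
    linarith
  intro x hx
  have hx' : x ∈ closure ((LinearMap.range (G : H →ₗ[ℂ] H) : Submodule ℂ H) : Set H) := by
    rw [← Submodule.topologicalClosure_coe]; exact hx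
  have hcl : IsClosed {x : H | c * ‖x‖ ^ 2 ≤ RCLike.re ⟪x, X x⟫} := by
    apply isClosed_le
    · fun_prop
    · exact RCLike.continuous_re.comp (Continuous.inner continuous_id X.continuous)
  have hsub : ((LinearMap.range (G : H →ₗ[ℂ] H) : Submodule ℂ H) : Set H)
      ⊆ {x : H | c * ‖x‖ ^ 2 ≤ RCLike.re ⟪x, X x⟫} := by
    rintro _ ⟨y, rfl⟩
    exact hmain y
  exact closure_minimal hsub hcl hx'

set_option maxHeartbeats 1000000 in
lemma polar_isometry (W : H →L[ℂ] H) :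
    ∃ V : H →L[ℂ] H,
      (∀ x, V (absCLM W x) = W x) ∧
      (∀ z ∈ ((LinearMap.range (absCLM W : H →ₗ[ℂ] H)).topologicalClosure)ᗮ, V z = 0) ∧
      (∀ x y : H, ⟪V x, V y⟫ =
        ⟪((LinearMap.range (absCLM W : H →ₗ[ℂ] H)).topologicalClosure.subtypeL ∘L
            Submodule.orthogonalProjectionOnto (LinearMap.range (absCLM W : H →ₗ[ℂ] H)).topologicalClosure) x, y⟫) ∧
      (∀ x, V x ∈ closure (Set.range ⇑W)) ∧
      (∀ u : H →L[ℂ] H, u * W = W * u → u * absCLM W = absCLM W * u →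
        star u * absCLM W = absCLM W * star u → u * V = V * u) := by
  set R := absCLM W with hR
  set K₀ := (LinearMap.range (R : H →ₗ[ℂ] H)).topologicalClosure with hK₀
  have hker : ∀ a b : H, R a = R b → W a = W b := by
    intro a b hab
    have h0 : ‖W a - W b‖ = 0 := by
      rw [← map_sub, ← norm_absCLM, map_sub, hab, sub_self, norm_zero]
    rw [← sub_eq_zero]
    exact norm_eq_zero.mp h0
  have memx : ∀ y : LinearMap.range (R : H →ₗ[ℂ] H), ∃ x, R x = (y : H) := fun y => LinearMap.mem_range.mp y.2
  have hWc : ∀ (y : LinearMap.range (R : H →ₗ[ℂ] H)) (x : H), R x = (y : H) → W (memx y).choose = W x :=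
    fun y x hx => hker _ _ ((memx y).choose_spec.trans hx.symm)
  let f₀ : LinearMap.range (R : H →ₗ[ℂ] H) →ₗᵢ[ℂ] H :=
    { toFun := fun y => W (memx y).choose
      map_add' := by
        intro y z
        have h1 : R ((memx y).choose + (memx z).choose) = ((y + z : LinearMap.range (R : H →ₗ[ℂ] H)) : H) := by
          rw [map_add, (memx y).choose_spec, (memx z).choose_spec, Submodule.coe_add]
        show W (memx (y + z)).choose = W (memx y).choose + W (memx z).choose
        rw [hWc (y + z) _ h1, map_add]
      map_smul' := by
        intro m y
        have h1 : R (m • (memx y).choose) = ((m • y : LinearMap.range (R : H →ₗ[ℂ] H)) : H) := by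
          rw [map_smul, (memx y).choose_spec, Submodule.coe_smul]
        show W (memx (m • y)).choose = m • W (memx y).choose
        rw [hWc (m • y) _ h1, map_smul]
      norm_map' := by
        intro y
        show ‖W (memx y).choose‖ = ‖y‖
        rw [← norm_absCLM, (memx y).choose_spec]
        rfl }
  have hf₀ : ∀ (y : LinearMap.range (R : H →ₗ[ℂ] H)) (x : H), R x = (y : H) → f₀ y = W x := fun y x hx =>
    hWc y x hx
  let e : LinearMap.range (R : H →ₗ[ℂ] H) →ₗᵢ[ℂ] K₀ :=
    { toLinearMap := Submodule.inclusion (Submodule.le_topologicalClosure _)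
      norm_map' := fun y => rfl }
  set eL := e.toContinuousLinearMap with heL
  set f₀L := f₀.toContinuousLinearMap with hf₀L
  have h_e : IsUniformInducing ⇑eL := e.isometry.isUniformInducing
  have h_dense : DenseRange ⇑eL := by
    rw [Metric.denseRange_iff]
    intro k ε hε
    have hk : (k : H) ∈ closure ((LinearMap.range (R : H →ₗ[ℂ] H) : Submodule ℂ H) : Set H) := by
      rw [← Submodule.topologicalClosure_coe]; exact k.2
    obtain ⟨b, hb, hlt⟩ := Metric.mem_closure_iff.mp hk ε hε
    exact ⟨⟨b, hb⟩, by rwa [Subtype.dist_eq]⟩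
  set Vext := f₀L.extend eL with hVext
  have hVextE : ∀ y, Vext (eL y) = f₀ y := fun y =>
    ContinuousLinearMap.extend_eq f₀L h_dense h_e y
  have hVextnorm : ∀ k : K₀, ‖Vext k‖ = ‖k‖ := by
    intro k
    refine DenseRange.induction_on h_dense k ?_ ?_
    · exact isClosed_eq Vext.continuous.norm continuous_norm
    · intro a
      rw [hVextE]
      exact (f₀.norm_map a).trans (e.norm_map a).symm
  have hVextinner : ∀ k k' : K₀, ⟪Vext k, Vext k'⟫ = ⟪(k : H), (k' : H)⟫ := by
    intro k k'
    let VI : K₀ →ₗᵢ[ℂ] H := ⟨Vext.toLinearMap, hVextnorm⟩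
    exact VI.inner_map_map k k'
  set V : H →L[ℂ] H := Vext ∘L Submodule.orthogonalProjectionOnto K₀ with hV
  have hVK : ∀ (k : K₀), V (k : H) = Vext k := by
    intro k
    show Vext (Submodule.orthogonalProjectionOnto K₀ (k : H)) = Vext k
    rw [Submodule.orthogonalProjectionOnto_mem_subspace_eq_self]
  have c1 : ∀ x, V (R x) = W x := by
    intro x
    have hmem : R x ∈ K₀ := Submodule.le_topologicalClosure _ (LinearMap.mem_range_self (R : H →ₗ[ℂ] H) x)
    have h1 : V (R x) = Vext ⟨R x, hmem⟩ := hVK ⟨R x, hmem⟩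
    have h2 : (⟨R x, hmem⟩ : K₀) = eL ⟨R x, LinearMap.mem_range_self (R : H →ₗ[ℂ] H) x⟩ := rfl
    rw [h1, h2, hVextE]
    exact hf₀ _ x rfl
  have c2 : ∀ z ∈ K₀ᗮ, V z = 0 := by
    intro z hz
    show Vext (Submodule.orthogonalProjectionOnto K₀ z) = 0
    rw [Submodule.orthogonalProjectionOnto_apply_of_mem_orthogonal hz, map_zero]
  have c3 : ∀ x y : H, ⟪V x, V y⟫ = ⟪(K₀.subtypeL ∘L Submodule.orthogonalProjectionOnto K₀) x, y⟫ := by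
    intro x y
    set P := K₀.subtypeL ∘L Submodule.orthogonalProjectionOnto K₀ with hP
    have h1 : ⟪V x, V y⟫ = ⟪P x, P y⟫ := hVextinner _ _
    have h2 : ⟪P x, y - P y⟫ = 0 :=
      (Submodule.mem_orthogonal K₀ _).mp (Submodule.sub_starProjection_mem_orthogonal y) _
        (Submodule.orthogonalProjectionOnto K₀ x).2
    calc ⟪V x, V y⟫ = ⟪P x, P y⟫ := h1
      _ = ⟪P x, P y⟫ + ⟪P x, y - P y⟫ := by rw [h2, add_zero]
      _ = ⟪P x, y⟫ := by rw [← inner_add_right]; congr 1; abel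
  have c4 : ∀ x, V x ∈ closure (Set.range ⇑W) := by
    intro x
    have hall : ∀ k : K₀, Vext k ∈ closure (Set.range ⇑W) := by
      intro k
      refine DenseRange.induction_on h_dense k ?_ ?_
      · exact isClosed_closure.preimage Vext.continuous
      · intro a
        rw [hVextE]
        exact subset_closure ⟨(memx a).choose, rfl⟩
    exact hall _
  have c5 : ∀ u : H →L[ℂ] H, u * W = W * u → u * R = R * u →
      star u * R = R * star u → u * V = V * u := by
    intro u huW huR hustarR
    ext x
    have hZ : ∀ y ∈ (K₀ : Set H), u (V y) = V (u y) := by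
      have hcl : IsClosed {y : H | u (V y) = V (u y)} :=
        isClosed_eq (u.continuous.comp V.continuous) (V.continuous.comp u.continuous)
      have hsub : ((LinearMap.range (R : H →ₗ[ℂ] H) : Submodule ℂ H) : Set H) ⊆ {y : H | u (V y) = V (u y)} := by
        rintro _ ⟨t, rfl⟩
        show u (V (R t)) = V (u (R t))
        have h1 : u (R t) = R (u t) := by
          calc u (R t) = (u * R) t := rfl
            _ = (R * u) t := by rw [huR]
            _ = R (u t) := rfl
        rw [c1, h1, c1]
        calc u (W t) = (u * W) t := rfl
          _ = (W * u) t := by rw [huW]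
          _ = W (u t) := rfl
      intro y hy
      rw [hK₀, Submodule.topologicalClosure_coe] at hy
      exact closure_minimal hsub hcl hy
    set P := K₀.subtypeL ∘L Submodule.orthogonalProjectionOnto K₀ with hP
    have hPmem : P x ∈ K₀ := (Submodule.orthogonalProjectionOnto K₀ x).2
    have hzmem : x - P x ∈ K₀ᗮ := Submodule.sub_starProjection_mem_orthogonal x
    have huz : u (x - P x) ∈ K₀ᗮ := by
      rw [Submodule.mem_orthogonal]
      intro w hw
      have h2 := ContinuousLinearMap.adjoint_inner_left u (x - P x) w
      rw [← ContinuousLinearMap.star_eq_adjoint] at h2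
      rw [← h2]
      exact (Submodule.mem_orthogonal K₀ _).mp hzmem _
        (maps_topologicalClosure_range hustarR w hw)
    have hVz : V (x - P x) = 0 := c2 _ hzmem
    have hVuz : V (u (x - P x)) = 0 := c2 _ huz
    have hxsplit : x = P x + (x - P x) := by abel
    show u (V x) = V (u x)
    calc u (V x) = u (V (P x) + V (x - P x)) := by rw [← map_add, ← hxsplit]
      _ = u (V (P x)) := by rw [hVz, add_zero]
      _ = V (u (P x)) := hZ _ hPmem
      _ = V (u (P x)) + V (u (x - P x)) := by rw [hVuz, add_zero]
      _ = V (u (P x) + u (x - P x)) := by rw [map_add]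
      _ = V (u x) := by rw [← map_add, ← hxsplit]
  exact ⟨V, c1, c2, c3, c4, c5⟩

end Stmt16Aux
section Stmt16Main

set_option maxHeartbeats 1000000

local notation "⟪" x ", " y "⟫" => @inner ℂ _ _ x y

/-- If `‖A‖ < c` and `‖(T + A) E‖ < c - ‖A‖`, then `E ∧ F^⊥ = 0` where `F` is the
spectral projection of `|T|` for `[0, c]`, and consequently `E ≼ F` in `M`. -/
theorem stmt16 (M : VonNeumannAlgebra H) (E T A : H →L[ℂ] H)
    (hEM : E ∈ M) (hTM : T ∈ M) (hAM : A ∈ M)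
    (hEsa : IsSelfAdjoint E) (hEidem : IsIdempotentElem E)
    (c : ℝ) (hc : 0 < c) (hA : ‖A‖ < c) (hTA : ‖(T + A) * E‖ < c - ‖A‖) :
    LinearMap.range (E : H →ₗ[ℂ] H) ⊓ LinearMap.range (specGT (absCLM T) c : H →ₗ[ℂ] H) = ⊥ ∧
      ∃ V ∈ M, star V * V = E ∧
        (1 - specGT (absCLM T) c) * (V * star V) = V * star V := by
  classical
  set B := absCLM T with hB
  have hBsa : IsSelfAdjoint B := absCLM_isSelfAdjoint T
  set G := cfc (fun t : ℝ => max (t - c) 0) B with hG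
  set F' := specGT B c with hF'
  have hF'G : F' = rangeProj G := rfl
  have hEadj : ContinuousLinearMap.adjoint E = E := by
    rw [← ContinuousLinearMap.star_eq_adjoint, hEsa.star_eq]
  -- ‖E‖ ≤ 1
  have hE1 : ‖E‖ ≤ 1 := by
    have h := CStarRing.norm_star_mul_self (x := E)
    rw [hEsa.star_eq, hEidem.eq] at h
    by_cases h0 : ‖E‖ = 0
    · rw [h0]; norm_num
    · have : 0 < ‖E‖ := lt_of_le_of_ne (norm_nonneg E) (Ne.symm h0)
      nlinarith
  -- ‖T E‖ < c
  have hTE : ‖T * E‖ < c := by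
    have h1 : T * E = (T + A) * E - A * E := by rw [add_mul]; abel
    have h2 : ‖T * E‖ ≤ ‖(T + A) * E‖ + ‖A * E‖ := by
      rw [h1]; exact norm_sub_le _ _
    have h3 : ‖A * E‖ ≤ ‖A‖ * ‖E‖ := norm_mul_le _ _
    nlinarith [norm_nonneg A]
  have hEfix : ∀ x ∈ LinearMap.range (E : H →ₗ[ℂ] H), E x = x := by
    rintro _ ⟨y, rfl⟩
    calc E (E y) = (E * E) y := rfl
      _ = E y := by rw [hEidem.eq]
  -- Part 1
  have part1 : LinearMap.range (E : H →ₗ[ℂ] H) ⊓ LinearMap.range (specGT (absCLM T) c : H →ₗ[ℂ] H) = ⊥ := by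
    rw [eq_bot_iff]
    rintro x ⟨hxE, hxF⟩
    have hxK : x ∈ (LinearMap.range (G : H →ₗ[ℂ] H)).topologicalClosure := by
      have : LinearMap.range (specGT (absCLM T) c : H →ₗ[ℂ] H) = (LinearMap.range (G : H →ₗ[ℂ] H)).topologicalClosure := by
        rw [show specGT (absCLM T) c = rangeProj G from rfl, range_rangeProj]
      rwa [this] at hxF
    have hlow := lower_bound hBsa c x hxK
    rw [Submodule.mem_bot]
    by_contra hx0
    have hxpos : 0 < ‖x‖ := norm_pos_iff.mpr hx0
    have h1 : RCLike.re ⟪x, B x⟫ ≤ ‖x‖ * ‖B x‖ :=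
      le_trans (RCLike.re_le_norm _) (norm_inner_le_norm x (B x))
    have h2 : ‖B x‖ = ‖T x‖ := norm_absCLM T x
    have h3 : T x = (T * E) x := by
      show T x = T (E x)
      rw [hEfix x hxE]
    have h4 : ‖T x‖ ≤ ‖T * E‖ * ‖x‖ := by rw [h3]; exact (T * E).le_opNorm x
    have h5 : ‖x‖ * ‖B x‖ ≤ ‖T * E‖ * ‖x‖ ^ 2 := by
      rw [h2]
      calc ‖x‖ * ‖T x‖ ≤ ‖x‖ * (‖T * E‖ * ‖x‖) := mul_le_mul_of_nonneg_left h4 (norm_nonneg x)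
        _ = ‖T * E‖ * ‖x‖ ^ 2 := by ring
    have h6 : c * ‖x‖ ^ 2 ≤ ‖T * E‖ * ‖x‖ ^ 2 := le_trans hlow (le_trans h1 h5)
    have h7 : c ≤ ‖T * E‖ := le_of_mul_le_mul_right h6 (pow_pos hxpos 2)
    linarith
  -- Part 2
  set W := (1 - F') * E with hW
  have hF'sa : IsSelfAdjoint F' := rangeProj_isSelfAdjoint G
  have hF'idem : F' * F' = F' := rangeProj_idem G
  have hkerW : ∀ x, W x = 0 ↔ E x = 0 := by
    intro x
    constructor
    · intro hx
      have hWx : E x - F' (E x) = 0 := hx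
      have hmem : E x ∈ LinearMap.range (E : H →ₗ[ℂ] H) ⊓ LinearMap.range (specGT (absCLM T) c : H →ₗ[ℂ] H) := by
        constructor
        · exact ⟨x, rfl⟩
        · exact ⟨E x, (sub_eq_zero.mp hWx).symm⟩
      rw [part1, Submodule.mem_bot] at hmem
      exact hmem
    · intro hx
      show (1 - F') (E x) = 0
      rw [hx, map_zero]
  have hRsa : IsSelfAdjoint (absCLM W) := absCLM_isSelfAdjoint W
  have hkerR : LinearMap.ker (absCLM W : H →ₗ[ℂ] H) = LinearMap.ker (E : H →ₗ[ℂ] H) := by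
    ext x
    simp only [LinearMap.mem_ker, ContinuousLinearMap.coe_coe]
    constructor
    · intro hx
      have : ‖W x‖ = 0 := by rw [← norm_absCLM, hx, norm_zero]
      exact (hkerW x).mp (norm_eq_zero.mp this)
    · intro hx
      have hWx : W x = 0 := (hkerW x).mpr hx
      have : ‖absCLM W x‖ = 0 := by rw [norm_absCLM, hWx, norm_zero]
      exact norm_eq_zero.mp this
  have hrangeEclosed : IsClosed ((LinearMap.range (E : H →ₗ[ℂ] H) : Submodule ℂ H) : Set H) := by
    have hre : LinearMap.range (E : H →ₗ[ℂ] H) = LinearMap.ker ((1 - E : H →L[ℂ] H) : H →ₗ[ℂ] H) := by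
      ext x
      constructor
      · rintro ⟨y, rfl⟩
        show (1 - E) (E y) = 0
        have : E (E y) = E y := hEfix _ ⟨y, rfl⟩
        simp [ContinuousLinearMap.sub_apply, this]
      · intro hx
        have h1 : x - E x = 0 := hx
        exact ⟨x, (sub_eq_zero.mp h1).symm⟩
    rw [hre]
    exact ContinuousLinearMap.isClosed_ker (1 - E)
  have hK₀E : (LinearMap.range (absCLM W : H →ₗ[ℂ] H)).topologicalClosure = LinearMap.range (E : H →ₗ[ℂ] H) := by
    calc (LinearMap.range (absCLM W : H →ₗ[ℂ] H)).topologicalClosure = (LinearMap.range (absCLM W : H →ₗ[ℂ] H))ᗮᗮ :=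
          (Submodule.orthogonal_orthogonal_eq_closure _).symm
      _ = (LinearMap.ker (absCLM W : H →ₗ[ℂ] H))ᗮ := by rw [ker_eq_orth_range hRsa]
      _ = (LinearMap.ker (E : H →ₗ[ℂ] H))ᗮ := by rw [hkerR]
      _ = (LinearMap.range (E : H →ₗ[ℂ] H))ᗮᗮ := by rw [ker_eq_orth_range hEsa]
      _ = (LinearMap.range (E : H →ₗ[ℂ] H)).topologicalClosure :=
          Submodule.orthogonal_orthogonal_eq_closure _
      _ = LinearMap.range (E : H →ₗ[ℂ] H) := IsClosed.submodule_topologicalClosure_eq hrangeEclosed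
  obtain ⟨V, hc1, hc2, hc3, hc4, hc5⟩ := polar_isometry W
  set K₀ := (LinearMap.range (absCLM W : H →ₗ[ℂ] H)).topologicalClosure with hK₀def
  -- the projection onto K₀ is E
  have hPE : ∀ x, (K₀.subtypeL ∘L Submodule.orthogonalProjectionOnto K₀) x = E x := by
    intro x
    have hm : E x ∈ K₀ := by rw [hK₀E]; exact ⟨x, rfl⟩
    have ho : x - E x ∈ K₀ᗮ := by
      rw [hK₀E, Submodule.mem_orthogonal]
      rintro _ ⟨y, rfl⟩
      have h := ContinuousLinearMap.adjoint_inner_left E (x - E x) y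
      rw [hEadj] at h
      rw [ContinuousLinearMap.coe_coe]
      rw [h]
      have hE0 : E (x - E x) = 0 := by
        rw [map_sub]
        have : E (E x) = E x := by
          calc E (E x) = (E * E) x := rfl
            _ = E x := by rw [hEidem.eq]
        rw [this, sub_self]
      rw [hE0, inner_zero_right]
    show K₀.starProjection x = E x
    rw [Submodule.eq_starProjection_of_mem_orthogonal hm ho]
  have hVV : star V * V = E := by
    ext x
    refine ext_inner_right ℂ ?_
    intro y
    have h1 : ⟪(star V * V) x, y⟫ = ⟪V x, V y⟫ := by
      show ⟪star V (V x), y⟫ = ⟪V x, V y⟫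
      rw [ContinuousLinearMap.star_eq_adjoint]
      exact ContinuousLinearMap.adjoint_inner_left V y (V x)
    rw [h1, hc3 x y, hPE]
  -- F' ∘ V = 0
  have hF'V : ∀ x, F' (V x) = 0 := by
    intro x
    have hWsub : Set.range ⇑W ⊆ {y : H | F' y = 0} := by
      rintro _ ⟨t, rfl⟩
      show F' (((1 - F') * E) t) = 0
      calc F' (((1 - F') * E) t) = (F' * ((1 - F') * E)) t := rfl
        _ = ((F' - F' * F') * E) t := by rw [← mul_assoc, mul_sub, mul_one]
        _ = 0 := by rw [hF'idem, sub_self, zero_mul]; rfl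
    have hcl : IsClosed {y : H | F' y = 0} := isClosed_eq F'.continuous continuous_const
    exact closure_minimal hWsub hcl (hc4 x)
  have h1F : (1 - F') * (V * star V) = V * star V := by
    ext x
    show (1 - F') (V (star V x)) = V (star V x)
    have : (1 - F') (V (star V x)) = V (star V x) - F' (V (star V x)) := rfl
    rw [this, hF'V, sub_zero]
  -- V ∈ M
  have hVM : V ∈ M := by
    rw [← SetLike.mem_coe, ← M.centralizer_centralizer]
    rw [Set.mem_centralizer_iff]
    intro u hu
    have hu' : ∀ m, m ∈ M → m * u = u * m := by
      intro m hm
      exact (Set.mem_centralizer_iff.mp hu) m (SetLike.mem_coe.mpr hm)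
    have hstaru : ∀ m, m ∈ M → m * star u = star u * m := by
      intro m hm
      have h2 : star m * u = u * star m := hu' (star m) (star_mem hm)
      calc m * star u = star (u * star m) := by rw [star_mul, star_star]
        _ = star (star m * u) := by rw [h2]
        _ = star u * m := by rw [star_mul, star_star]
    have uE : u * E = E * u := (hu' E hEM).symm
    have uT : u * T = T * u := (hu' T hTM).symm
    have ustarT : u * star T = star T * u := (hu' (star T) (star_mem hTM)).symm
    have sE : star u * E = E * star u := (hstaru E hEM).symm
    have sT : star u * T = T * star u := (hstaru T hTM).symm
    have sstarT : star u * star T = star T * star u := (hstaru (star T) (star_mem hTM)).symm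
    have uS : u * (star T * T) = (star T * T) * u := by
      rw [← mul_assoc, ustarT, mul_assoc, uT, ← mul_assoc]
    have sS : star u * (star T * T) = (star T * T) * star u := by
      rw [← mul_assoc, sstarT, mul_assoc, sT, ← mul_assoc]
    have uB : u * B = B * u := commute_cfc (IsSelfAdjoint.star_mul_self T) uS Real.sqrt
    have sB : star u * B = B * star u := commute_cfc (IsSelfAdjoint.star_mul_self T) sS Real.sqrt
    have uG : u * G = G * u := commute_cfc hBsa uB _
    have sG : star u * G = G * star u := commute_cfc hBsa sB _
    have uF' : u * F' = F' * u := by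
      rw [hF'G, rangeProj]
      exact commute_projCLM (maps_topologicalClosure_range uG)
        (maps_topologicalClosure_range sG)
    have sF' : star u * F' = F' * star u := by
      rw [hF'G, rangeProj]
      refine commute_projCLM (maps_topologicalClosure_range sG) ?_
      intro x hx
      rw [star_star]
      exact maps_topologicalClosure_range uG x hx
    have u1F : u * (1 - F') = (1 - F') * u := by
      rw [mul_sub, sub_mul, mul_one, one_mul, uF']
    have s1F : star u * (1 - F') = (1 - F') * star u := by
      rw [mul_sub, sub_mul, mul_one, one_mul, sF']
    have uW : u * W = W * u := by
      rw [hW, ← mul_assoc, u1F, mul_assoc, uE, ← mul_assoc]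
    have sW : star u * W = W * star u := by
      rw [hW, ← mul_assoc, s1F, mul_assoc, sE, ← mul_assoc]
    have ustarW : u * star W = star W * u := by
      have h := congrArg star sW
      rw [star_mul (star u) W, star_mul W (star u), star_star] at h
      exact h.symm
    have sstarW : star u * star W = star W * star u := by
      have h := congrArg star uW
      rw [star_mul u W, star_mul W u] at h
      exact h.symm
    have uSW : u * (star W * W) = (star W * W) * u := by
      rw [← mul_assoc, ustarW, mul_assoc, uW, ← mul_assoc]
    have sSW : star u * (star W * W) = (star W * W) * star u := by
      rw [← mul_assoc, sstarW, mul_assoc, sW, ← mul_assoc]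
    have uR : u * absCLM W = absCLM W * u :=
      commute_cfc (IsSelfAdjoint.star_mul_self W) uSW Real.sqrt
    have sR : star u * absCLM W = absCLM W * star u :=
      commute_cfc (IsSelfAdjoint.star_mul_self W) sSW Real.sqrt
    exact hc5 u uW uR sR
  exact ⟨part1, V, hVM, hVV, h1F⟩

end Stmt16Main
end
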